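/- Let ψ₁, ψ₂ ∈ D_ℝ and set (φᵢ, ηᵢ) = Γ[ψᵢ] for i = 1, 2. If the function ψ₂ − ψ₁ is nonnegative and nondecreasing on [0,∞), then η₁ − η₂ is nonnegative and nondecreasing on [0,∞), and φ₂(t) ≥ φ₁(t) for all t ≥ 0. -/

import Mathlib

open MeasureTheory Filter Set
open scoped NNReal ENNReal BoundedContinuousFunction Topology

noncomputable section

/-- Càdlàg on `[0,∞)`: right-continuous at every `t ≥ 0`, with left limits at
every `t > 0` (along `[0,t)`). -/
def CadlagOn {E : Type*} [TopologicalSpace E] (f : ℝ → E) : Prop :=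
  (∀ t : ℝ, 0 ≤ t → ContinuousWithinAt f (Set.Ici t) t) ∧
  (∀ t : ℝ, 0 < t → ∃ l : E, Filter.Tendsto f (nhdsWithin t (Set.Ico 0 t)) (nhds l))

/-- `D_ℝ`: real-valued càdlàg paths on `[0,∞)`. -/
def DR (f : ℝ → ℝ) : Prop := CadlagOn f

/-- `D_ℝ^↑`: nonnegative nondecreasing real-valued càdlàg paths on `[0,∞)`. -/
def DRup (f : ℝ → ℝ) : Prop :=
  CadlagOn f ∧ (∀ t : ℝ, 0 ≤ t → 0 ≤ f t) ∧ MonotoneOn f (Set.Ici 0)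

/-- `D_M`: càdlàg paths with values in the space of finite nonnegative measures
on `[0,∞)`, equipped with the topology of weak convergence. -/
def DM (ζ : ℝ → FiniteMeasure ℝ≥0) : Prop := CadlagOn ζ

/-- `D_M^↑`: paths in `D_M` such that `t ↦ ∫ f dζ_t` is nondecreasing for every
nonnegative bounded continuous `f` on `[0,∞)`. -/
def DMup (ζ : ℝ → FiniteMeasure ℝ≥0) : Prop :=
  CadlagOn ζ ∧
  ∀ f : ℝ≥0 →ᵇ ℝ≥0, MonotoneOn (fun t => (ζ t).testAgainstNN f) (Set.Ici 0)

/-- First component of the Skorokhod map on the half-line: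
`Γ₁[ψ](t) = ψ(t) − inf_{s∈[0,t]} (ψ(s) ∧ 0)`. -/
def Gamma1 (ψ : ℝ → ℝ) (t : ℝ) : ℝ :=
  ψ t - sInf ((fun s => min (ψ s) 0) '' Set.Icc 0 t)

/-- Second component of the Skorokhod map on the half-line: `Γ₂[ψ] = Γ₁[ψ] − ψ`. -/
def Gamma2 (ψ : ℝ → ℝ) (t : ℝ) : ℝ := Gamma1 ψ t - ψ t

/-- Extension of `g : [0,∞) → ℝ` by `0` on `(-∞,0)`. -/
def lsExt (g : ℝ → ℝ) : ℝ → ℝ := fun t => if t < 0 then 0 else g t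

/- The Lebesgue–Stieltjes measure `m^g(B) = g(0)δ₀(B) + ∫_{(0,∞)} 1_B dg` of a
nonnegative nondecreasing right-continuous `g` on `[0,∞)`, realized as the
Stieltjes measure of the extension of `g` by `0` on `(-∞,0)`. -/
open scoped Classical in
def lsMeasure (g : ℝ → ℝ) : Measure ℝ :=
  if h : Monotone (lsExt g) ∧ ∀ t, ContinuousWithinAt (lsExt g) (Set.Ici t) t then
    StieltjesFunction.measure ⟨lsExt g, h.1, h.2⟩
  else 0

/-- The measure-valued Skorokhod problem (MVSP): `(ξ,β,ι)` solves the MVSP for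
the data `(α,μ)`. -/
def SolvesMVSP (α : ℝ → FiniteMeasure ℝ≥0) (μ : ℝ → ℝ)
    (ξ β : ℝ → FiniteMeasure ℝ≥0) (ι : ℝ → ℝ) : Prop :=
  (∀ x : ℝ≥0, ∀ t : ℝ, 0 ≤ t →
    (ξ t (Set.Iic x) : ℝ) = (α t (Set.Iic x) : ℝ) - μ t + (β t (Set.Ioi x) : ℝ) + ι t) ∧
  (∀ x : ℝ≥0, ∀ᵐ t ∂(lsMeasure (fun s => (β s (Set.Ioi x) : ℝ))), (ξ t (Set.Iic x) : ℝ) = 0) ∧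
  (∀ x : ℝ≥0, ∀ᵐ t ∂(lsMeasure ι), (ξ t (Set.Iic x) : ℝ) = 0) ∧
  (∀ t : ℝ, 0 ≤ t → (β t Set.univ : ℝ) + ι t = μ t)

/-- System (30): `(ξ,β,ι)` solves the MVSP for `(α, μ+ρ)` and `ξ_t[0,t) = 0`
for every `t > 0`. -/
def Solves30 (α : ℝ → FiniteMeasure ℝ≥0) (μ : ℝ → ℝ)
    (ξ β : ℝ → FiniteMeasure ℝ≥0) (ι ρ : ℝ → ℝ) : Prop :=
  SolvesMVSP α (fun t => μ t + ρ t) ξ β ι ∧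
  ∀ t : ℝ, 0 < t → (ξ t (Set.Iio (Real.toNNReal t)) : ℝ) = 0

/-- A minimal solution of system (30): a solution (lying in the appropriate
path spaces) whose reneging function `ρ` is pointwise below that of any other
solution. -/
def IsMinimalSol30 (α : ℝ → FiniteMeasure ℝ≥0) (μ : ℝ → ℝ)
    (ξ β : ℝ → FiniteMeasure ℝ≥0) (ι ρ : ℝ → ℝ) : Prop :=
  (DM ξ ∧ DMup β ∧ DRup ι ∧ DRup ρ ∧ Solves30 α μ ξ β ι ρ) ∧
  ∀ (ξ' β' : ℝ → FiniteMeasure ℝ≥0) (ι' ρ' : ℝ → ℝ),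
    DM ξ' → DMup β' → DRup ι' → DRup ρ' → Solves30 α μ ξ' β' ι' ρ' →
    ∀ t : ℝ, 0 ≤ t → ρ t ≤ ρ' t

/-- The (topological) support of a finite measure on `[0,∞)`: the set of points
all of whose open neighborhoods have positive measure. -/
def measSupport (ν : FiniteMeasure ℝ≥0) : Set ℝ≥0 :=
  {x : ℝ≥0 | ∀ u : Set ℝ≥0, IsOpen u → x ∈ u → ν u ≠ 0}

/-- `σ(ν) = inf supp[ν]`, with value `∞` when `ν = 0`. -/
def sigmaOf (ν : FiniteMeasure ℝ≥0) : ℝ≥0∞ :=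
  sInf ((fun x : ℝ≥0 => (x : ℝ≥0∞)) '' measSupport ν)

/-- Assumption A on the data `(α,μ)`. -/
def AssumptionA (α : ℝ → FiniteMeasure ℝ≥0) (μ : ℝ → ℝ) : Prop :=
  (∃ (ξ0 : FiniteMeasure ℝ≥0) (a0 : ℝ → FiniteMeasure ℝ≥0)
      (lam : ℝ → ℝ) (ν : FiniteMeasure ℝ≥0),
    (∀ x : ℝ≥0, ξ0 {x} = 0) ∧
    ContinuousOn a0 (Set.Ici 0) ∧ DMup a0 ∧
    (∀ t : ℝ, 0 ≤ t → ∀ x : ℝ≥0, a0 t {x} = 0) ∧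
    Measurable lam ∧ (∀ s : ℝ, 0 ≤ s → 0 ≤ lam s) ∧
    (∀ t : ℝ, 0 ≤ t → α t = a0 t + ξ0) ∧
    (∀ t : ℝ, 0 ≤ t → ∀ x : ℝ≥0, (a0 t (Set.Iic x) : ℝ) =
      ∫ s in Set.Icc (0:ℝ) t,
        (if s ≤ (x:ℝ) then lam s * (ν (Set.Iic (Real.toNNReal ((x:ℝ) - s))) : ℝ) else 0)) ∧
    (∀ t : ℝ, 0 ≤ t →
      Filter.Tendsto (fun x : ℝ≥0 =>
          sSup ((fun s => lam s * (ν (Set.Iic x) : ℝ)) '' Set.Icc (0:ℝ) t))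
        (nhdsWithin 0 (Set.Ioi 0)) (nhds 0))) ∧
  (∃ μ0 m : ℝ → ℝ,
    ContinuousOn μ0 (Set.Ici 0) ∧ (∀ t : ℝ, 0 ≤ t → 0 ≤ μ0 t) ∧
    MonotoneOn μ0 (Set.Ici 0) ∧
    Measurable m ∧ (∀ s : ℝ, 0 ≤ s → 0 ≤ m s) ∧
    (∀ t : ℝ, 0 ≤ t → MeasureTheory.IntegrableOn m (Set.Icc 0 t)) ∧
    (∀ t : ℝ, 0 ≤ t → 0 < sInf (m '' Set.Icc (0:ℝ) t)) ∧
    (∀ t : ℝ, 0 ≤ t → μ t = μ0 t + ∫ s in Set.Icc (0:ℝ) t, m s))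

lemma cadlag_bddBelow (ψ : ℝ → ℝ) (h : CadlagOn ψ) (t : ℝ) :
    BddBelow (ψ '' Set.Icc 0 t) := by
  rcases lt_or_ge t 0 with ht | ht
  · simp [Set.Icc_eq_empty_of_lt ht]
  have key : ∀ s ∈ Set.Icc (0:ℝ) t, ∃ V : Set ℝ, IsOpen V ∧ s ∈ V ∧
      ∃ c : ℝ, ∀ u ∈ V ∩ Set.Icc (0:ℝ) t, c ≤ ψ u := by
    intro s hs
    have hs0 : (0:ℝ) ≤ s := hs.1
    have hr := h.1 s hs0
    have hr' : ∀ᶠ u in 𝓝[Set.Ici s] s, ψ s - 1 ≤ ψ u :=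
      hr.eventually (eventually_ge_nhds (by linarith : ψ s - 1 < ψ s))
    rcases mem_nhdsWithin.1 hr' with ⟨W, hWopen, hsW, hW⟩
    rcases eq_or_lt_of_le hs0 with hs0' | hs0'
    · refine ⟨W, hWopen, hsW, ψ s - 1, ?_⟩
      intro u hu
      exact hW ⟨hu.1, by rw [← hs0']; exact hu.2.1⟩
    · rcases h.2 s hs0' with ⟨l, hl⟩
      have hl' : ∀ᶠ u in 𝓝[Set.Ico 0 s] s, l - 1 ≤ ψ u :=
        hl.eventually (eventually_ge_nhds (by linarith : l - 1 < l))
      rcases mem_nhdsWithin.1 hl' with ⟨W', hW'open, hsW', hW'⟩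
      refine ⟨W ∩ W', hWopen.inter hW'open, ⟨hsW, hsW'⟩,
        min (ψ s - 1) (l - 1), ?_⟩
      intro u hu
      rcases le_or_gt s u with h1 | h1
      · exact le_trans (min_le_left _ _) (hW ⟨hu.1.1, h1⟩)
      · exact le_trans (min_le_right _ _) (hW' ⟨hu.1.2, hu.2.1, h1⟩)
  choose V hVopen hVmem c hc using key
  obtain ⟨T, hTcov⟩ := (isCompact_Icc (a := (0:ℝ)) (b := t)).elim_nhds_subcover'
    (fun x hx => V x hx) (fun x hx => (hVopen x hx).mem_nhds (hVmem x hx))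
  have hTne : T.Nonempty := by
    rcases Finset.eq_empty_or_nonempty T with rfl | h
    · exfalso
      have := hTcov (Set.mem_Icc.2 ⟨le_refl 0, ht⟩)
      simpa using this
    · exact h
  refine ⟨T.inf' hTne (fun x => c x x.2), ?_⟩
  rintro y ⟨u, hu, rfl⟩
  obtain ⟨x, hxT, hxV⟩ : ∃ x ∈ T, u ∈ V x x.2 := by
    have := hTcov hu
    simpa using this
  exact le_trans (Finset.inf'_le _ hxT) (hc x x.2 u ⟨hxV, hu⟩)

/-- Monotonicity of the Skorokhod map on the half-line: if `ψ₂ − ψ₁` is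
nonnegative and nondecreasing on `[0,∞)`, then `η₁ − η₂` is nonnegative and
nondecreasing on `[0,∞)` and `φ₂ ≥ φ₁` on `[0,∞)`. -/
theorem skorokhod_map_monotone
    (ψ₁ ψ₂ : ℝ → ℝ) (hψ₁ : DR ψ₁) (hψ₂ : DR ψ₂)
    (hnonneg : ∀ t : ℝ, 0 ≤ t → 0 ≤ ψ₂ t - ψ₁ t)
    (hmono : MonotoneOn (fun t => ψ₂ t - ψ₁ t) (Set.Ici 0)) :
    (∀ t : ℝ, 0 ≤ t → 0 ≤ Gamma2 ψ₁ t - Gamma2 ψ₂ t) ∧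
    MonotoneOn (fun t => Gamma2 ψ₁ t - Gamma2 ψ₂ t) (Set.Ici 0) ∧
    (∀ t : ℝ, 0 ≤ t → Gamma1 ψ₁ t ≤ Gamma1 ψ₂ t) := by
  set f₁ : ℝ → ℝ := fun s => min (ψ₁ s) 0 with hf₁
  set f₂ : ℝ → ℝ := fun s => min (ψ₂ s) 0 with hf₂
  set m₁ : ℝ → ℝ := fun t => sInf (f₁ '' Set.Icc 0 t) with hm₁
  set m₂ : ℝ → ℝ := fun t => sInf (f₂ '' Set.Icc 0 t) with hm₂
  -- boundedness
  have hb₁ : ∀ t : ℝ, BddBelow (f₁ '' Set.Icc 0 t) := by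
    intro t
    obtain ⟨c, hc⟩ := cadlag_bddBelow ψ₁ hψ₁ t
    refine ⟨min c 0, ?_⟩
    rintro y ⟨u, hu, rfl⟩
    exact min_le_min (hc ⟨u, hu, rfl⟩) le_rfl
  have hb₂ : ∀ t : ℝ, BddBelow (f₂ '' Set.Icc 0 t) := by
    intro t
    obtain ⟨c, hc⟩ := cadlag_bddBelow ψ₂ hψ₂ t
    refine ⟨min c 0, ?_⟩
    rintro y ⟨u, hu, rfl⟩
    exact min_le_min (hc ⟨u, hu, rfl⟩) le_rfl
  have hne : ∀ (g : ℝ → ℝ) (t : ℝ), 0 ≤ t → (g '' Set.Icc 0 t).Nonempty := by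
    intro g t ht
    exact ⟨g 0, 0, ⟨le_refl 0, ht⟩, rfl⟩
  -- pointwise comparison of f's
  have hf12 : ∀ u : ℝ, 0 ≤ u → f₁ u ≤ f₂ u := fun u hu =>
    min_le_min (by linarith [hnonneg u hu]) le_rfl
  have hfsum : ∀ u : ℝ, 0 ≤ u → f₂ u ≤ f₁ u + (ψ₂ u - ψ₁ u) := by
    intro u hu
    have h0 := hnonneg u hu
    rcases le_total (ψ₁ u) 0 with h | h
    · simp only [hf₁, hf₂, min_def]
      split_ifs <;> linarith
    · simp only [hf₁, hf₂, min_def]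
      split_ifs <;> linarith
  -- key1 : m₁ ≤ m₂
  have key1 : ∀ t : ℝ, 0 ≤ t → m₁ t ≤ m₂ t := by
    intro t ht
    refine le_csInf (hne f₂ t ht) ?_
    rintro b ⟨u, hu, rfl⟩
    exact le_trans (csInf_le (hb₁ t) ⟨u, hu, rfl⟩) (hf12 u hu.1)
  -- key3 : m₂ s ≤ m₁ s + δ s
  have key3 : ∀ s : ℝ, 0 ≤ s → m₂ s ≤ m₁ s + (ψ₂ s - ψ₁ s) := by
    intro s hs
    have : m₂ s - (ψ₂ s - ψ₁ s) ≤ m₁ s := by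
      refine le_csInf (hne f₁ s hs) ?_
      rintro b ⟨u, hu, rfl⟩
      have h1 : m₂ s ≤ f₂ u := csInf_le (hb₂ s) ⟨u, hu, rfl⟩
      have h2 : f₂ u ≤ f₁ u + (ψ₂ u - ψ₁ u) := hfsum u hu.1
      have h3 : ψ₂ u - ψ₁ u ≤ ψ₂ s - ψ₁ s := hmono hu.1 hs hu.2
      linarith
    linarith
  -- key2 : for 0 ≤ s ≤ t, m₁ t + m₂ s ≤ m₂ t + m₁ s
  have key2 : ∀ s t : ℝ, 0 ≤ s → s ≤ t → m₁ t + m₂ s ≤ m₂ t + m₁ s := by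
    intro s t hs hst
    rcases eq_or_lt_of_le hst with rfl | hlt
    · linarith
    have ht : (0:ℝ) ≤ t := le_trans hs hst
    have hIoc : Set.Ioc s t ⊆ Set.Icc 0 t := fun u hu => ⟨le_trans hs (le_of_lt hu.1), hu.2⟩
    have hsplit : Set.Icc (0:ℝ) t = Set.Icc 0 s ∪ Set.Ioc s t :=
      (Set.Icc_union_Ioc_eq_Icc hs hst).symm
    set B₁ : ℝ := sInf (f₁ '' Set.Ioc s t) with hB₁
    set B₂ : ℝ := sInf (f₂ '' Set.Ioc s t) with hB₂
    have hBne : (Set.Ioc s t).Nonempty := ⟨t, hlt, le_refl t⟩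
    have hb₁' : BddBelow (f₁ '' Set.Ioc s t) := (hb₁ t).mono (Set.image_mono hIoc)
    have hb₂' : BddBelow (f₂ '' Set.Ioc s t) := (hb₂ t).mono (Set.image_mono hIoc)
    have hm₁t : m₁ t = min (m₁ s) B₁ := by
      rw [hm₁]
      simp only
      rw [hsplit, Set.image_union, csInf_union (hb₁ s) (hne f₁ s hs) hb₁' (hBne.image f₁)]
    have hm₂t : m₂ t = min (m₂ s) B₂ := by
      rw [hm₂]
      simp only
      rw [hsplit, Set.image_union, csInf_union (hb₂ s) (hne f₂ s hs) hb₂' (hBne.image f₂)]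
    have hA₂0 : m₂ s ≤ 0 :=
      le_trans (csInf_le (hb₂ s) ⟨0, ⟨le_refl 0, hs⟩, rfl⟩) (min_le_right _ _)
    have hB₂ge : min (m₂ s) (B₁ + (ψ₂ s - ψ₁ s)) ≤ B₂ := by
      refine le_csInf (hBne.image f₂) ?_
      rintro b ⟨u, hu, rfl⟩
      rcases le_or_gt 0 (ψ₂ u) with hcase | hcase
      · have : f₂ u = 0 := min_eq_right hcase
        rw [this]
        exact le_trans (min_le_left _ _) hA₂0
      · have hfu : f₂ u = ψ₂ u := min_eq_left (le_of_lt hcase)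
        have h1 : B₁ ≤ f₁ u := csInf_le hb₁' ⟨u, hu, rfl⟩
        have h2 : f₁ u ≤ ψ₁ u := min_le_left _ _
        have h3 : ψ₂ s - ψ₁ s ≤ ψ₂ u - ψ₁ u :=
          hmono hs (le_trans hs (le_of_lt hu.1)) (le_of_lt hu.1)
        have : B₁ + (ψ₂ s - ψ₁ s) ≤ f₂ u := by rw [hfu]; linarith
        exact le_trans (min_le_right _ _) this
    have hA := key3 s hs
    rw [hm₁t, hm₂t]
    rcases le_total (m₂ s) (B₁ + (ψ₂ s - ψ₁ s)) with hc | hc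
    · have h1 : min (m₂ s) (B₁ + (ψ₂ s - ψ₁ s)) = m₂ s := min_eq_left hc
      rw [h1] at hB₂ge
      have : min (m₂ s) B₂ = m₂ s := min_eq_left hB₂ge
      rw [this]
      have : min (m₁ s) B₁ ≤ m₁ s := min_le_left _ _
      linarith
    · have h1 : min (m₂ s) (B₁ + (ψ₂ s - ψ₁ s)) = B₁ + (ψ₂ s - ψ₁ s) := min_eq_right hc
      rw [h1] at hB₂ge
      have h2 : min (m₁ s) B₁ ≤ B₁ := min_le_right _ _
      have h3 : min (m₂ s) B₂ ≥ min (m₂ s) (B₁ + (ψ₂ s - ψ₁ s)) :=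
        le_min (min_le_left _ _) (le_trans (min_le_right _ _) hB₂ge)
      rw [h1] at h3
      rcases le_total (m₂ s) B₂ with hd | hd
      · rw [min_eq_left hd]; linarith
      · rw [min_eq_right hd]; linarith
  refine ⟨?_, ?_, ?_⟩
  · intro t ht
    have := key1 t ht
    simp only [Gamma2, Gamma1]
    change 0 ≤ (ψ₁ t - m₁ t - ψ₁ t) - (ψ₂ t - m₂ t - ψ₂ t)
    linarith
  · intro s hs t ht hst
    have := key2 s t hs hst
    simp only [Gamma2, Gamma1]
    change (ψ₁ s - m₁ s - ψ₁ s) - (ψ₂ s - m₂ s - ψ₂ s) ≤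
      (ψ₁ t - m₁ t - ψ₁ t) - (ψ₂ t - m₂ t - ψ₂ t)
    linarith
  · intro t ht
    have := key3 t ht
    simp only [Gamma1]
    change ψ₁ t - m₁ t ≤ ψ₂ t - m₂ t
    linarith

end
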